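/- Assume the p=3 parasupersymmetry algebra and let Ψ be a simultaneous eigenvector of S. Then for every finite word w in the two letters Q and Q† (i.e. every finite composition of the operators Q and Q†), there exist a scalar λ ∈ ℂ and a natural number k ≤ 3 such that either wΨ = λ·QᵏΨ or wΨ = λ·(Q†)ᵏΨ. -/

import Mathlib

open ContinuousLinearMap

/-- The set `S` of nine operators `{H, QQ†, Q†Q, Q²Q†², Q†²Q², QQ†²Q, Q†Q²Q†, QQ†QQ†, Q†QQ†Q}`. -/
def opSetS {𝓗 : Type*} [NormedAddCommGroup 𝓗] [InnerProductSpace ℂ 𝓗] [CompleteSpace 𝓗]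
    (Q H : 𝓗 →L[ℂ] 𝓗) : Set (𝓗 →L[ℂ] 𝓗) :=
  {H, Q * adjoint Q, adjoint Q * Q,
    Q ^ 2 * (adjoint Q) ^ 2, (adjoint Q) ^ 2 * Q ^ 2,
    Q * (adjoint Q) ^ 2 * Q, adjoint Q * Q ^ 2 * adjoint Q,
    Q * adjoint Q * Q * adjoint Q, adjoint Q * Q * adjoint Q * Q}

/-- `Ψ` is a simultaneous eigenvector of the nine operators in `S`. -/
def IsSimulEig {𝓗 : Type*} [NormedAddCommGroup 𝓗] [InnerProductSpace ℂ 𝓗] [CompleteSpace 𝓗]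
    (Q H : 𝓗 →L[ℂ] 𝓗) (Ψ : 𝓗) : Prop :=
  Ψ ≠ 0 ∧ ∀ A ∈ opSetS Q H, ∃ μ : ℂ, A Ψ = μ • Ψ

/-- The operator corresponding to a finite word in the two letters `Q` (encoded `true`)
and `Q†` (encoded `false`): the product (composition) of the corresponding operators. -/
noncomputable def wordOp {𝓗 : Type*} [NormedAddCommGroup 𝓗] [InnerProductSpace ℂ 𝓗] [CompleteSpace 𝓗]
    (Q : 𝓗 →L[ℂ] 𝓗) (w : List Bool) : 𝓗 →L[ℂ] 𝓗 :=
  (w.map (fun b => if b then Q else adjoint Q)).prod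

set_option maxHeartbeats 2000000 in
/-- Assuming the p=3 parasupersymmetry algebra, if `Ψ` is a simultaneous
eigenvector of `S`, then for every finite word `w` in the letters `Q`, `Q†`, there are a
scalar `λ` and `k ≤ 3` with `wΨ = λ • QᵏΨ` or `wΨ = λ • (Q†)ᵏΨ`. -/
theorem stmt6 {𝓗 : Type*} [NormedAddCommGroup 𝓗] [InnerProductSpace ℂ 𝓗] [CompleteSpace 𝓗]
    (Q H : 𝓗 →L[ℂ] 𝓗) (hH : IsSelfAdjoint H)
    (hQH : Q * H = H * Q) (hQdH : adjoint Q * H = H * adjoint Q)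
    (hii : Q ^ 3 * adjoint Q + Q ^ 2 * adjoint Q * Q + Q * adjoint Q * Q ^ 2
      + adjoint Q * Q ^ 3 = 6 * (Q ^ 2 * H))
    (hiii : Q * (adjoint Q) ^ 2 * Q = adjoint Q * Q ^ 2 * adjoint Q)
    (hiv : (adjoint Q) ^ 3 * Q + (adjoint Q) ^ 2 * Q * adjoint Q
      + adjoint Q * Q * (adjoint Q) ^ 2 + Q * (adjoint Q) ^ 3 = 6 * ((adjoint Q) ^ 2 * H))
    (hQ4 : Q ^ 4 = 0) (hQd4 : (adjoint Q) ^ 4 = 0)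
    (Ψ : 𝓗) (hΨ : IsSimulEig Q H Ψ) (w : List Bool) :
    ∃ (lam : ℂ) (k : ℕ), k ≤ 3 ∧
      (wordOp Q w Ψ = lam • (Q ^ k) Ψ ∨ wordOp Q w Ψ = lam • ((adjoint Q) ^ k) Ψ) := by
  classical
  obtain ⟨hΨ0, hS⟩ := hΨ
  set A := adjoint Q with hA
  obtain ⟨E, hE⟩ := hS H (by
    unfold opSetS; exact Set.mem_insert _ _)
  obtain ⟨a, ha⟩ := hS (Q * A) (by
    unfold opSetS; simp only [Set.mem_insert_iff]; tauto)
  obtain ⟨b, hb⟩ := hS (A * Q) (by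
    unfold opSetS; simp only [Set.mem_insert_iff]; tauto)
  obtain ⟨c, hc⟩ := hS (Q ^ 2 * A ^ 2) (by
    unfold opSetS; simp only [Set.mem_insert_iff]; tauto)
  obtain ⟨d, hd⟩ := hS (A ^ 2 * Q ^ 2) (by
    unfold opSetS; simp only [Set.mem_insert_iff]; tauto)
  have ha' : Q (A Ψ) = a • Ψ := ha
  have hb' : A (Q Ψ) = b • Ψ := hb
  have hc' : Q (Q (A (A Ψ))) = c • Ψ := by
    simpa [pow_succ, mul_apply] using hc
  have hd' : A (A (Q (Q Ψ))) = d • Ψ := by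
    simpa [pow_succ, mul_apply] using hd
  -- b = 0 forces QΨ = 0, a = 0 forces AΨ = 0
  have hQ0 : b = 0 → Q Ψ = 0 := by
    intro h0
    have h1 : (inner ℂ (Q Ψ) (Q Ψ) : ℂ) = 0 := by
      have h2 := ContinuousLinearMap.adjoint_inner_left Q Ψ (Q Ψ)
      rw [← hA, hb', h0, zero_smul] at h2
      rw [← h2, inner_zero_left]
    exact inner_self_eq_zero.mp h1
  have hA0 : a = 0 → A Ψ = 0 := by
    intro h0
    have h1 : (inner ℂ (A Ψ) (A Ψ) : ℂ) = 0 := by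
      have h2 := ContinuousLinearMap.adjoint_inner_left Q (A Ψ) Ψ
      rw [← hA, ha', h0, zero_smul] at h2
      rw [h2, inner_zero_right]
    exact inner_self_eq_zero.mp h1
  -- claim 1 : A Q² Ψ ∝ Q Ψ
  obtain ⟨l1, hl1⟩ : ∃ l : ℂ, A (Q (Q Ψ)) = l • Q Ψ := by
    rcases eq_or_ne b 0 with h0 | hb0
    · exact ⟨0, by simp [hQ0 h0]⟩
    · refine ⟨d / b, ?_⟩
      have h3 := ContinuousLinearMap.ext_iff.mp hiii (Q Ψ)
      simp only [← hA, ContinuousLinearMap.mul_apply, pow_succ, pow_zero, one_apply, one_mul] at h3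
      -- h3 : Q (A (A (Q (Q Ψ)))) = A (Q (Q (A (Q Ψ))))
      rw [hd', hb'] at h3
      simp only [map_smul] at h3
      -- h3 : d • Q Ψ = b • A (Q (Q Ψ))
      apply smul_right_injective 𝓗 hb0
      simp only [smul_smul]
      rw [← h3, mul_div_cancel₀ _ hb0]
  -- claim 3 : Q A² Ψ ∝ A Ψ
  obtain ⟨m1, hm1⟩ : ∃ m : ℂ, Q (A (A Ψ)) = m • A Ψ := by
    rcases eq_or_ne a 0 with h0 | ha0
    · exact ⟨0, by simp [hA0 h0]⟩
    · refine ⟨c / a, ?_⟩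
      have h3 := ContinuousLinearMap.ext_iff.mp hiii (A Ψ)
      simp only [← hA, ContinuousLinearMap.mul_apply, pow_succ, pow_zero, one_apply, one_mul] at h3
      -- h3 : Q (A (A (Q (A Ψ)))) = A (Q (Q (A (A Ψ))))
      rw [ha', hc'] at h3
      simp only [map_smul] at h3
      -- h3 : a • Q (A (A Ψ)) = c • A Ψ
      apply smul_right_injective 𝓗 ha0
      simp only [smul_smul]
      rw [h3, mul_div_cancel₀ _ ha0]
  -- claim 2 : A Q³ Ψ ∝ Q² Ψ
  obtain ⟨l2, hl2⟩ : ∃ l : ℂ, A (Q (Q (Q Ψ))) = l • Q (Q Ψ) := by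
    refine ⟨6 * E - b - l1 - a, ?_⟩
    have h2 := ContinuousLinearMap.ext_iff.mp hii Ψ
    simp only [← hA, ContinuousLinearMap.mul_apply, add_apply, pow_succ, pow_zero, one_apply, one_mul] at h2
    rw [ha', hb', hl1, hE] at h2
    simp only [map_smul] at h2
    have h6 : ((6 : 𝓗 →L[ℂ] 𝓗)) (Q (Q Ψ)) = (6 : ℂ) • Q (Q Ψ) := by
      simp
      try module
    rw [h6] at h2
    have hx : A (Q (Q (Q Ψ))) =
        E • (6:ℂ) • Q (Q Ψ) - a • Q (Q Ψ) - b • Q (Q Ψ) - l1 • Q (Q Ψ) := by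
      rw [← h2]; abel
    rw [hx]
    simp only [smul_smul, ← sub_smul]
    ring_nf
  -- claim 4 : Q A³ Ψ ∝ A² Ψ
  obtain ⟨m2, hm2⟩ : ∃ m : ℂ, Q (A (A (A Ψ))) = m • A (A Ψ) := by
    refine ⟨6 * E - a - m1 - b, ?_⟩
    have h2 := ContinuousLinearMap.ext_iff.mp hiv Ψ
    simp only [← hA, ContinuousLinearMap.mul_apply, add_apply, pow_succ, pow_zero, one_apply, one_mul] at h2
    rw [ha', hb', hm1, hE] at h2
    simp only [map_smul] at h2
    have h6 : ((6 : 𝓗 →L[ℂ] 𝓗)) (A (A Ψ)) = (6 : ℂ) • A (A Ψ) := by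
      simp
      try module
    rw [h6] at h2
    have hx : Q (A (A (A Ψ))) =
        E • (6:ℂ) • A (A Ψ) - b • A (A Ψ) - a • A (A Ψ) - m1 • A (A Ψ) := by
      rw [← h2]; abel
    rw [hx]
    simp only [smul_smul, ← sub_smul]
    ring_nf
  -- vanishing at level 4
  have hq4 : Q (Q (Q (Q Ψ))) = 0 := by
    have := ContinuousLinearMap.ext_iff.mp hQ4 Ψ
    simpa [pow_succ, mul_apply] using this
  have had4 : A (A (A (A Ψ))) = 0 := by
    have := ContinuousLinearMap.ext_iff.mp hQd4 Ψ
    simpa [← hA, pow_succ, mul_apply] using this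
  -- power application facts
  have pQ0 : (Q ^ 0) Ψ = Ψ := by simp
  have pQ1 : (Q ^ 1) Ψ = Q Ψ := by simp
  have pQ2 : (Q ^ 2) Ψ = Q (Q Ψ) := by simp [pow_succ, mul_apply]
  have pQ3 : (Q ^ 3) Ψ = Q (Q (Q Ψ)) := by simp [pow_succ, mul_apply]
  have pA0 : (A ^ 0) Ψ = Ψ := by simp
  have pA1 : (A ^ 1) Ψ = A Ψ := by simp
  have pA2 : (A ^ 2) Ψ = A (A Ψ) := by simp [pow_succ, mul_apply]
  have pA3 : (A ^ 3) Ψ = A (A (A Ψ)) := by simp [pow_succ, mul_apply]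
  -- induction on the word
  induction w with
  | nil =>
      exact ⟨1, 0, by norm_num, Or.inl (by simp [wordOp])⟩
  | cons bb t ih =>
      obtain ⟨lam, k, hk, hcase⟩ := ih
      cases bb
      · -- letter A = Q†
        have hcons : wordOp Q (false :: t) Ψ = A (wordOp Q t Ψ) := by
          simp [wordOp, hA, List.prod_cons, mul_apply]
        rcases hcase with hL | hR
        · -- state Qᵏ Ψ
          interval_cases k
          · exact ⟨lam, 1, by norm_num, Or.inr (by
              rw [hcons, hL, pQ0, map_smul, pA1])⟩
          · exact ⟨lam * b, 0, by norm_num, Or.inl (by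
              rw [hcons, hL, pQ1, map_smul, hb', pQ0, smul_smul])⟩
          · exact ⟨lam * l1, 1, by norm_num, Or.inl (by
              rw [hcons, hL, pQ2, map_smul, hl1, pQ1, smul_smul])⟩
          · exact ⟨lam * l2, 2, by norm_num, Or.inl (by
              rw [hcons, hL, pQ3, map_smul, hl2, pQ2, smul_smul])⟩
        · -- state Aᵏ Ψ
          interval_cases k
          · exact ⟨lam, 1, by norm_num, Or.inr (by
              rw [hcons, hR, pA0, map_smul, pA1])⟩
          · exact ⟨lam, 2, by norm_num, Or.inr (by
              rw [hcons, hR, pA1, map_smul, pA2])⟩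
          · exact ⟨lam, 3, by norm_num, Or.inr (by
              rw [hcons, hR, pA2, map_smul, pA3])⟩
          · exact ⟨0, 0, by norm_num, Or.inr (by
              rw [hcons, hR, pA3, map_smul, had4, pA0, smul_zero, zero_smul])⟩
      · -- letter Q
        have hcons : wordOp Q (true :: t) Ψ = Q (wordOp Q t Ψ) := by
          simp [wordOp, List.prod_cons, mul_apply]
        rcases hcase with hL | hR
        · interval_cases k
          · exact ⟨lam, 1, by norm_num, Or.inl (by
              rw [hcons, hL, pQ0, map_smul, pQ1])⟩
          · exact ⟨lam, 2, by norm_num, Or.inl (by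
              rw [hcons, hL, pQ1, map_smul, pQ2])⟩
          · exact ⟨lam, 3, by norm_num, Or.inl (by
              rw [hcons, hL, pQ2, map_smul, pQ3])⟩
          · exact ⟨0, 0, by norm_num, Or.inl (by
              rw [hcons, hL, pQ3, map_smul, hq4, pQ0, smul_zero, zero_smul])⟩
        · interval_cases k
          · exact ⟨lam, 1, by norm_num, Or.inl (by
              rw [hcons, hR, pA0, map_smul, pQ1])⟩
          · exact ⟨lam * a, 0, by norm_num, Or.inl (by
              rw [hcons, hR, pA1, map_smul, ha', pQ0, smul_smul])⟩
          · exact ⟨lam * m1, 1, by norm_num, Or.inr (by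
              rw [hcons, hR, pA2, map_smul, hm1, pA1, smul_smul])⟩
          · exact ⟨lam * m2, 2, by norm_num, Or.inr (by
              rw [hcons, hR, pA3, map_smul, hm2, pA2, smul_smul])⟩
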